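/- Let size be the expectation size(s,h) = |dom(h)| (the number of allocated cells, as an element of ℝ≥0∞). For expressions e, e' (functions from stacks to integers), let [e ↦ e'] be the predicate holding exactly on heaps whose domain is {s(e)} with value s(e') there, and let [e ↪ e'] = [e ↦ e'] ⋆ 1 be its intuitionistic version. Then [e ↦ e'] ⋆ size = [e ↪ e'] · (size − 1), where subtraction is truncated subtraction in ℝ≥0∞ and · is pointwise multiplication. -/

import Mathlib

open scoped ENNReal

abbrev Stack : Type := ℕ → ℤ
abbrev Heap : Type := Finmap (fun _ : ℕ+ => ℤ)
abbrev Exp : Type := Stack × Heap → ℝ≥0∞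

/-- Quantitative separating conjunction: supremum (= maximum, as the set of
partitions of a finite heap is finite and nonempty) over all splittings of the
heap into two disjoint parts. -/
noncomputable def sepCon (X Y : Exp) : Exp := fun sh =>
  ⨆ (h₁ : Heap) (h₂ : Heap) (_ : h₁.Disjoint h₂) (_ : sh.2 = h₁ ∪ h₂),
    X (sh.1, h₁) * Y (sh.1, h₂)

open Classical in
noncomputable def iv (φ : Stack × Heap → Prop) : Exp :=
  fun sh => if φ sh then 1 else 0

/-- The heap-size expectation: the number of allocated cells. -/
noncomputable def size : Exp := fun sh => (sh.2.keys.card : ℝ≥0∞)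

/-- The points-to predicate: the heap consists of exactly one cell at address
e (a positive natural) containing e'. -/
def ptsTo (e e' : Stack → ℤ) : Stack × Heap → Prop := fun sh =>
  ∃ p : ℕ+, ((p : ℕ) : ℤ) = e sh.1 ∧ sh.2.keys = {p} ∧
    sh.2.lookup p = some (e' sh.1)

lemma sepCon_ptsTo_eval (e e' : Stack → ℤ) (Y : Exp) (s : Stack) (h : Heap)
    (p : ℕ+) (hpe : ((p : ℕ) : ℤ) = e s) (hl : h.lookup p = some (e' s)) :
    sepCon (iv (ptsTo e e')) Y (s, h) = Y (s, h.erase p) := by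
  have hpm : p ∈ h := Finmap.mem_iff.mpr ⟨_, hl⟩
  apply le_antisymm
  · refine iSup_le fun h₁ => iSup_le fun h₂ => iSup_le fun hd => iSup_le fun hu => ?_
    simp only [iv]
    split_ifs with hP
    · obtain ⟨q, hqe, hk, hql⟩ := hP
      have hu' : h = h₁ ∪ h₂ := hu
      have hqp : q = p := by
        have : ((q : ℕ) : ℤ) = ((p : ℕ) : ℤ) := hqe.trans hpe.symm
        exact_mod_cast this
      subst hqp
      have hq1 : q ∈ h₁ := Finmap.mem_keys.mp (by rw [hk]; exact Finset.mem_singleton_self q)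
      have h₂eq : h₂ = h.erase q := by
        apply Finmap.ext_lookup fun x => ?_
        by_cases hx : x = q
        · subst hx
          rw [Finmap.lookup_erase]
          exact Finmap.lookup_eq_none.mpr (hd x hq1)
        · rw [Finmap.lookup_erase_ne hx, hu']
          have hx1 : x ∉ h₁ := fun hm =>
            hx (Finset.mem_singleton.mp (hk ▸ Finmap.mem_keys.mpr hm))
          rw [Finmap.lookup_union_right hx1]
      rw [one_mul, h₂eq]
    · simp
  · have hd : (Finmap.singleton p (e' s)).Disjoint (h.erase p) := by
      intro x hx hx'
      rw [Finmap.mem_singleton] at hx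
      subst hx
      exact Finmap.notMem_erase_self hx'
    have hu : h = Finmap.singleton p (e' s) ∪ h.erase p := by
      rw [Finmap.union_comm_of_disjoint hd, Finmap.erase_union_singleton p _ h hl]
    have hP : ptsTo e e' (s, Finmap.singleton p (e' s)) :=
      ⟨p, hpe, Finmap.keys_singleton p (e' s), Finmap.lookup_singleton_eq⟩
    calc Y (s, h.erase p)
        = iv (ptsTo e e') (s, Finmap.singleton p (e' s)) * Y (s, h.erase p) := by
          simp [iv, hP]
      _ ≤ _ := by
          refine le_iSup_of_le (Finmap.singleton p (e' s)) ?_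
          refine le_iSup_of_le (h.erase p) ?_
          refine le_iSup_of_le hd ?_
          exact le_iSup_of_le hu le_rfl

lemma sepCon_ptsTo_eval0 (e e' : Stack → ℤ) (Y : Exp) (s : Stack) (h : Heap)
    (hQ : ¬ ∃ p : ℕ+, ((p : ℕ) : ℤ) = e s ∧ h.lookup p = some (e' s)) :
    sepCon (iv (ptsTo e e')) Y (s, h) = 0 := by
  refine le_antisymm (iSup_le fun h₁ => iSup_le fun h₂ => iSup_le fun hd => iSup_le fun hu => ?_)
    (zero_le)
  simp only [iv]
  split_ifs with hP
  · obtain ⟨q, hqe, hk, hql⟩ := hP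
    exfalso
    apply hQ
    have hu' : h = h₁ ∪ h₂ := hu
    have hq1 : q ∈ h₁ := Finmap.mem_keys.mp (by rw [hk]; exact Finset.mem_singleton_self q)
    exact ⟨q, hqe, by rw [hu', Finmap.lookup_union_left hq1]; exact hql⟩
  · simp

theorem ptsTo_sepCon_size (e e' : Stack → ℤ) :
    sepCon (iv (ptsTo e e')) size =
      fun sh => sepCon (iv (ptsTo e e')) 1 sh * (size sh - 1) := by
  funext sh
  obtain ⟨s, h⟩ := sh
  by_cases hQ : ∃ p : ℕ+, ((p : ℕ) : ℤ) = e s ∧ h.lookup p = some (e' s)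
  · obtain ⟨p, hpe, hl⟩ := hQ
    have hpm : p ∈ h := Finmap.mem_iff.mpr ⟨_, hl⟩
    rw [sepCon_ptsTo_eval e e' size s h p hpe hl,
        sepCon_ptsTo_eval e e' 1 s h p hpe hl]
    have hmem : p ∈ h.keys := Finmap.mem_keys.mpr hpm
    have hcard : (h.erase p).keys.card = h.keys.card - 1 := by
      rw [Finmap.keys_erase, Finset.card_erase_of_mem hmem]
    have hge : 1 ≤ h.keys.card := Finset.card_pos.mpr ⟨p, hmem⟩
    simp only [size, Pi.one_apply, one_mul, hcard]
    rw [ENNReal.natCast_sub, Nat.cast_one]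
  · rw [sepCon_ptsTo_eval0 e e' size s h hQ, sepCon_ptsTo_eval0 e e' 1 s h hQ, zero_mul]
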